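/- Let A ⊂ ℤⁿ be a finite set with |A| = n + 1 such that the subgroup of ℤⁿ generated by the difference set A − A has rank n. Then for every t ≥ 0, |tA| = C(t + n, n). -/

import Mathlib

open Pointwise

/-- If `A ⊂ ℤⁿ` is finite with `|A| = n + 1` and the subgroup of `ℤⁿ` generated by the
difference set `A − A` has rank `n`, then `|tA| = C(t + n, n)` for every `t ≥ 0`. -/
theorem stmt_9 (n : ℕ) (A : Finset (Fin n → ℤ)) (hcard : A.card = n + 1)
    (hrank : Module.finrank ℤ
      (Submodule.span ℤ ((A : Set (Fin n → ℤ)) - (A : Set (Fin n → ℤ)))) = n) :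
    ∀ t : ℕ, (t • A).card = Nat.choose (t + n) n := by
  classical
  -- enumerate A
  have e : Fin (n + 1) ≃ A := (A.equivFin.trans (finCongr hcard)).symm
  set a : Fin (n + 1) → (Fin n → ℤ) := fun i => (e i : Fin n → ℤ) with ha
  have ha_mem : ∀ i, a i ∈ A := fun i => (e i).2
  have ha_surj : ∀ x ∈ A, ∃ i, a i = x := by
    intro x hx
    obtain ⟨i, hi⟩ := e.surjective ⟨x, hx⟩
    exact ⟨i, congrArg Subtype.val hi⟩
  set v : Fin n → (Fin n → ℤ) := fun k => a k.succ - a 0 with hv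
  -- the span of the v's is the span of A - A
  have haux : ∀ i, a i - a 0 ∈ Submodule.span ℤ (Set.range v) := by
    intro i
    induction i using Fin.cases with
    | zero => simp
    | succ k => exact Submodule.subset_span ⟨k, rfl⟩
  have hspan : Submodule.span ℤ (Set.range v)
      = Submodule.span ℤ ((A : Set (Fin n → ℤ)) - (A : Set (Fin n → ℤ))) := by
    apply le_antisymm
    · rw [Submodule.span_le]
      rintro _ ⟨k, rfl⟩
      exact Submodule.subset_span ⟨a k.succ, ha_mem _, a 0, ha_mem _, rfl⟩
    · rw [Submodule.span_le]
      rintro x ⟨p, hp, q, hq, rfl⟩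
      obtain ⟨i, rfl⟩ := ha_surj p hp
      obtain ⟨j, rfl⟩ := ha_surj q hq
      show a i - a j ∈ Submodule.span ℤ (Set.range v)
      have h : a i - a j = (a i - a 0) - (a j - a 0) := by abel
      rw [h]
      exact sub_mem (haux i) (haux j)
  -- linear independence of the v's
  set f := Fintype.linearCombination ℤ v with hf
  have hrange : LinearMap.range f = Submodule.span ℤ (Set.range v) :=
    Fintype.range_linearCombination ℤ v
  have hker : LinearMap.ker f = ⊥ := by
    have h : Module.finrank ℤ ((⊤ : Submodule ℤ (Fin n → ℤ)).map f)
        = Module.finrank ℤ (⊤ : Submodule ℤ (Fin n → ℤ)) := by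
      rw [Submodule.map_top, hrange, hspan, hrank, finrank_top, Module.finrank_fin_fun]
    have hd := Submodule.disjoint_ker_of_finrank_le (L := ⊤) f h.ge
    exact disjoint_top.mp hd.symm
  have hinj : ∀ z : Fin n → ℤ, ∑ k, z k • v k = 0 → z = 0 := by
    intro z hz
    have : f z = 0 := by simpa [hf, Fintype.linearCombination_apply] using hz
    rw [← LinearMap.mem_ker, hker, Submodule.mem_bot] at this
    exact this
  -- injectivity on weight tuples
  have tuple : ∀ c d : Fin (n + 1) → ℕ, (∑ i, c i = ∑ i, d i) →
      (∑ i, (c i : ℤ) • a i = ∑ i, (d i : ℤ) • a i) → c = d := by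
    intro c d hsum hval
    set g : Fin (n + 1) → ℤ := fun i => (c i : ℤ) - (d i : ℤ) with hg
    have hg0 : ∑ i, g i = 0 := by
      simp only [hg, Finset.sum_sub_distrib]
      rw [sub_eq_zero]
      exact_mod_cast congrArg (Nat.cast : ℕ → ℤ) hsum
    have hga : ∑ i, g i • a i = 0 := by
      simp only [hg, sub_smul, Finset.sum_sub_distrib]
      rw [sub_eq_zero, hval]
    have hgv : ∑ i, g i • (a i - a 0) = 0 := by
      simp only [smul_sub, Finset.sum_sub_distrib, ← Finset.sum_smul, hga, hg0, zero_smul,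
        sub_zero]
    have hgv2 : ∑ k : Fin n, g k.succ • v k = 0 := by
      rw [Fin.sum_univ_succ] at hgv
      rw [sub_self, smul_zero, zero_add] at hgv
      exact hgv
    have hzero : (fun k : Fin n => g k.succ) = 0 := hinj _ hgv2
    have hsucc : ∀ k : Fin n, g k.succ = 0 := fun k => congrFun hzero k
    have h0 : g 0 = 0 := by
      rw [Fin.sum_univ_succ] at hg0
      simpa [hsucc] using hg0
    have hgall : ∀ i, g i = 0 := by
      intro i
      induction i using Fin.cases with
      | zero => exact h0
      | succ k => exact hsucc k
    funext i
    have := hgall i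
    rw [hg, sub_eq_zero] at this
    exact_mod_cast this
  -- the sum map on multisets
  intro t
  set φ : ∀ t : ℕ, Sym (Fin (n + 1)) t → (Fin n → ℤ) :=
    fun t m => ((m : Multiset (Fin (n + 1))).map a).sum with hφ
  have hcount : ∀ t (m : Sym (Fin (n + 1)) t),
      φ t m = ∑ i, ((m : Multiset (Fin (n + 1))).count i : ℤ) • a i := by
    intro t m
    rw [hφ]
    dsimp only
    rw [Finset.sum_multiset_map_count]
    rw [Finset.sum_subset (Finset.subset_univ _)]
    · refine Finset.sum_congr rfl fun i _ => ?_
      rw [natCast_zsmul]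
    · intro i _ hi
      rw [Multiset.count_eq_zero_of_notMem (by simpa using hi), zero_smul]
  have hcountsum : ∀ t (m : Sym (Fin (n + 1)) t),
      ∑ i, (m : Multiset (Fin (n + 1))).count i = t := by
    intro t m
    refine (Finset.sum_subset (Finset.subset_univ _) ?_).symm.trans
      ((Multiset.toFinset_sum_count_eq _).trans m.2)
    intro i _ hi
    exact Multiset.count_eq_zero_of_notMem (by simpa using hi)
  have hφinj : ∀ t, Function.Injective (φ t) := by
    intro t m₁ m₂ h
    rw [hcount, hcount] at h
    have := tuple (fun i => (m₁ : Multiset (Fin (n + 1))).count i)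
      (fun i => (m₂ : Multiset (Fin (n + 1))).count i)
      (by rw [hcountsum, hcountsum]) h
    apply Subtype.ext
    apply Multiset.ext.mpr
    intro i
    exact congrFun this i
  have key : ∀ t : ℕ, t • A = Finset.image (φ t) Finset.univ := by
    intro t
    induction t with
    | zero =>
      ext x
      simp only [zero_nsmul, Finset.mem_image, Finset.mem_univ, true_and]
      constructor
      · intro hx
        refine ⟨(0 : Sym (Fin (n + 1)) 0), ?_⟩
        have hx0 : x = 0 := by simpa using hx
        simp [hφ, hx0, Sym.toMultiset_zero]
      · rintro ⟨m, rfl⟩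
        have : (m : Multiset (Fin (n + 1))) = 0 := Multiset.card_eq_zero.mp m.2
        simp [hφ, this]
    | succ t ih =>
      rw [succ_nsmul, ih]
      ext x
      simp only [Finset.mem_add, Finset.mem_image, Finset.mem_univ, true_and]
      constructor
      · rintro ⟨y, ⟨m, rfl⟩, z, hz, rfl⟩
        obtain ⟨j, rfl⟩ := ha_surj z hz
        refine ⟨j ::ₛ m, ?_⟩
        simp only [hφ, Sym.coe_cons, Multiset.map_cons, Multiset.sum_cons]
        abel
      · rintro ⟨m, rfl⟩
        obtain ⟨j, m', rfl⟩ := m.exists_eq_cons_of_succ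
        refine ⟨φ t m', ⟨m', rfl⟩, a j, ha_mem j, ?_⟩
        simp only [hφ, Sym.coe_cons, Multiset.map_cons, Multiset.sum_cons]
        abel
  rw [key t, Finset.card_image_of_injective _ (hφinj t), Finset.card_univ,
    Sym.card_sym_eq_choose,
    show Fintype.card (Fin (n + 1)) + t - 1 = t + n by simp [Fintype.card_fin]; omega]
  exact Nat.choose_symm_add
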